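/- (Exterior interaction PDE.) For θ = (c, Γ, a, b, ν) ∈ ℝ × ℝ_{>0} × ℝ × ℝ × ℝ_{>0}, set F(x, y | θ) := φ(x; c, Γ)·φ(y; a·x+b, ν). Then for all x, y, a, b ∈ ℝ and Γ, ν > 0, the mixed partial derivative of F in c and b, evaluated at c = 0, satisfies ∂²F/∂c∂b (x, y | (0, Γ, a, b, ν)) = Γ^{−1} · ∂F/∂a (x, y | (0, Γ, a, b, ν)). -/

import Mathlib

/-- The univariate Gaussian density with mean `b` and variance `ν`:
`φ(y; b, ν) = (2πν)^(-1/2) exp(−(y−b)²/(2ν))`. -/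
noncomputable def gauss1 (y b ν : ℝ) : ℝ :=
  (2 * Real.pi * ν) ^ (-(1 : ℝ) / 2) * Real.exp (-((y - b) ^ 2) / (2 * ν))

/-- For `θ = (c, Γ, a, b, ν)`, `F(x, y | θ) := φ(x; c, Γ) · φ(y; a·x + b, ν)`. -/
noncomputable def F1 (c Γ a b ν : ℝ) (x y : ℝ) : ℝ :=
  gauss1 x c Γ * gauss1 y (a * x + b) ν

lemma gauss1_hasDerivAt (y ν : ℝ) (hν : ν ≠ 0) (m : ℝ) :
    HasDerivAt (fun m => gauss1 y m ν) (gauss1 y m ν * ((y - m) / ν)) m := by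
  have h1 : HasDerivAt (fun m : ℝ => y - m) (-1) m := (hasDerivAt_id m).const_sub y
  have h2 := h1.pow 2
  have h3 := (h2.neg).div_const (2 * ν)
  have h4 := h3.exp
  have h5 := h4.const_mul ((2 * Real.pi * ν) ^ (-(1 : ℝ) / 2))
  convert h5 using 1
  · rfl
  · rfl
  · rfl
  unfold gauss1
  simp only [Pi.neg_apply, Pi.pow_apply]
  field_simp
  ring

/-- **Exterior interaction PDE.** For all `x y a b : ℝ` and `Γ, ν > 0`, the mixed
partial derivative of `F` in `c` and `b`, evaluated at `c = 0`, satisfies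
`∂²F/∂c∂b (x, y | (0, Γ, a, b, ν)) = Γ⁻¹ · ∂F/∂a (x, y | (0, Γ, a, b, ν))`. -/
theorem exterior_interaction_pde (x y a b Γ ν : ℝ) (hΓ : 0 < Γ) (hν : 0 < ν) :
    deriv (fun c => deriv (fun b' => F1 c Γ a b' ν x y) b) 0
      = Γ⁻¹ * deriv (fun a' => F1 0 Γ a' b ν x y) a := by
  have hνne := hν.ne'
  have hΓne := hΓ.ne'
  set K : ℝ := gauss1 y (a * x + b) ν * ((y - (a * x + b)) / ν) with hK
  have hin : ∀ c : ℝ, deriv (fun b' => F1 c Γ a b' ν x y) b = gauss1 x c Γ * K := by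
    intro c
    have hinner : HasDerivAt (fun b' : ℝ => a * x + b') 1 b := (hasDerivAt_id b).const_add (a * x)
    have h := ((gauss1_hasDerivAt y ν hνne (a * x + b)).comp b hinner).const_mul (gauss1 x c Γ)
    have h' : HasDerivAt (fun b' => F1 c Γ a b' ν x y) (gauss1 x c Γ * K) b := by
      simpa [F1, hK] using h
    exact h'.deriv
  have hL : HasDerivAt (fun c => deriv (fun b' => F1 c Γ a b' ν x y) b)
      (gauss1 x 0 Γ * ((x - 0) / Γ) * K) 0 := by
    have h := (gauss1_hasDerivAt x Γ hΓne 0).mul_const K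
    exact h.congr_of_eventuallyEq (Filter.Eventually.of_forall fun c => (hin c))
  have hinnerA : HasDerivAt (fun a' : ℝ => a' * x + b) x a := by
    simpa using ((hasDerivAt_id a).mul_const x).add_const b
  have hR : HasDerivAt (fun a' => F1 0 Γ a' b ν x y)
      (gauss1 x 0 Γ * (gauss1 y (a * x + b) ν * ((y - (a * x + b)) / ν) * x)) a := by
    have h := ((gauss1_hasDerivAt y ν hνne (a * x + b)).comp a hinnerA).const_mul (gauss1 x 0 Γ)
    simpa [F1] using h
  rw [hL.deriv, hR.deriv, hK]
  field_simp
  ring
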